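/- In the reinforced urn process, the joint law of the first m failure states has the explicit product form P(ξ_1 = a_1,…,ξ_m = a_m) = ∏_{l≥0} [∏_{i=0}^{d_l - 1}(b_l + s i) · ∏_{i=0}^{f_l - 1}(w_l + s i)] / ∏_{i=0}^{d_l + f_l - 1}(w_l + b_l + s i), where d_l = #{p ≤ m : a_p = l} and f_l = #{p ≤ m : a_p > l} (each factor equals 1 for all but finitely many l); in particular the joint law depends on (a_1,…,a_m) only through the counts (d_l, f_l), so the sequence (ξ_i)_{i≥1} is exchangeable. -/

import Mathlib

open Finset

/-- Probability that a single system, facing urns whose current compositions are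
`(W j white, B j black)` for each state `j`, draws white at states `0, …, r-1`
(moving up one state after each white ball) and then black at state `r`,
i.e. that its 0-block ends at state `r`. Within one block every urn is sampled
at most once, so no reinforcement occurs inside the block. -/
noncomputable def blockProb (W B : ℕ → ℝ) (r : ℕ) : ℝ :=
  (B r / (W r + B r)) * ∏ j ∈ range r, W j / (W j + B j)

/-- Updated white compositions after observing a system that failed at state `r`:
each urn `j < r` delivered a white ball and receives `s` extra white balls. -/
noncomputable def updW (s : ℝ) (W : ℕ → ℝ) (r : ℕ) : ℕ → ℝ :=
  fun j => if j < r then W j + s else W j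

/-- Updated black compositions after observing a system that failed at state `r`:
urn `r` delivered a black ball and receives `s` extra black balls. -/
noncomputable def updB (s : ℝ) (B : ℕ → ℝ) (r : ℕ) : ℕ → ℝ :=
  fun j => if j = r then B j + s else B j

/-- Joint probability that the successive systems of the reinforced urn process
fail at the states listed in `a` : the first system fails at `a.head`, then the
urns are Pólya-reinforced, the second system fails at the next entry, etc. -/
noncomputable def jointXi (s : ℝ) (W B : ℕ → ℝ) : List ℕ → ℝ
  | [] => 1
  | r :: a => blockProb W B r * jointXi s (updW s W r) (updB s B r) a

/-- The generic factor of the product formula. -/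
noncomputable def rupTerm (s : ℝ) (W B : ℕ → ℝ) (a : List ℕ) (l : ℕ) : ℝ :=
  ((∏ i ∈ range (a.count l), (B l + s * i)) *
      ∏ i ∈ range (a.countP fun p => l < p), (W l + s * i)) /
    ∏ i ∈ range (a.count l + a.countP fun p => l < p), (W l + B l + s * i)

lemma rup_count_cons (a : List ℕ) (l r : ℕ) :
    (r :: a).count l = a.count l + if l = r then 1 else 0 := by
  rcases eq_or_ne l r with h | h
  · simp [List.count_cons, h]
  · simp [List.count_cons, h, Ne.symm h]

lemma rup_countP_cons (a : List ℕ) (l r : ℕ) :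
    ((r :: a).countP fun p => l < p) = (a.countP fun p => l < p) + if l < r then 1 else 0 := by
  simp [List.countP_cons]

lemma rup_shift (c s : ℝ) (n : ℕ) :
    ∏ i ∈ range (n+1), (c + s * i) = c * ∏ i ∈ range n, (c + s + s * i) := by
  rw [Finset.prod_range_succ']
  simp only [Nat.cast_zero, mul_zero, add_zero, Nat.cast_add, Nat.cast_one]
  rw [mul_comm]
  congr 1
  exact Finset.prod_congr rfl (fun i _ => by ring)

lemma rupTerm_cons (s : ℝ) (W B : ℕ → ℝ) (r : ℕ) (a : List ℕ) (l : ℕ) :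
    rupTerm s W B (r :: a) l =
      (if l = r then B r / (W r + B r) else if l < r then W l / (W l + B l) else 1) *
        rupTerm s (updW s W r) (updB s B r) a l := by
  have hc := rup_count_cons a l r
  have hp := rup_countP_cons a l r
  rcases lt_trichotomy l r with h | h | h
  · -- l < r : white factor picks up one more term, urn l gains s white balls
    have hne : l ≠ r := ne_of_lt h
    rw [rupTerm, rupTerm, hc, hp]
    simp only [hne, h, if_true, if_false, add_zero]
    have hW : updW s W r l = W l + s := by simp [updW, h]
    have hB : updB s B r l = B l := by simp [updB, hne]
    rw [hW, hB]
    rw [rup_shift (W l) s, show a.count l + ((a.countP fun p => l < p) + 1)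
        = (a.count l + (a.countP fun p => l < p)) + 1 by ring, rup_shift (W l + B l) s]
    rw [show (∏ i ∈ range (a.count l), (B l + s * i)) *
          (W l * ∏ i ∈ range (a.countP fun p => l < p), (W l + s + s * i)) =
        W l * ((∏ i ∈ range (a.count l), (B l + s * i)) *
          ∏ i ∈ range (a.countP fun p => l < p), (W l + s + s * i)) by ring]
    rw [mul_div_mul_comm]
    congr 2
    exact Finset.prod_congr rfl (fun i _ => by ring)
  · -- l = r : black factor picks up one more term, urn r gains s black balls
    subst h
    rw [rupTerm, rupTerm, hc, hp]
    simp only [if_true, lt_irrefl, if_false, add_zero]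
    have hW : updW s W l l = W l := by simp [updW]
    have hB : updB s B l l = B l + s := by simp [updB]
    rw [hW, hB]
    rw [rup_shift (B l) s, show a.count l + 1 + (a.countP fun p => l < p)
        = (a.count l + (a.countP fun p => l < p)) + 1 by ring, rup_shift (W l + B l) s]
    rw [show (B l * ∏ i ∈ range (a.count l), (B l + s + s * i)) *
          (∏ i ∈ range (a.countP fun p => l < p), (W l + s * i)) =
        B l * ((∏ i ∈ range (a.count l), (B l + s + s * i)) *
          ∏ i ∈ range (a.countP fun p => l < p), (W l + s * i)) by ring]
    rw [mul_div_mul_comm]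
    congr 2
    exact Finset.prod_congr rfl (fun i _ => by ring)
  · -- r < l : nothing changes
    have hne : l ≠ r := (ne_of_lt h).symm
    have hnl : ¬ l < r := not_lt_of_gt h
    rw [rupTerm, rupTerm, hc, hp]
    simp only [hne, hnl, if_false, add_zero]
    have hW : updW s W r l = W l := by simp [updW, hnl]
    have hB : updB s B r l = B l := by simp [updB, hne]
    rw [hW, hB, one_mul]

lemma rupTerm_eq_one (s : ℝ) (W B : ℕ → ℝ) (a : List ℕ) (l : ℕ)
    (h : ∀ p ∈ a, p < l) : rupTerm s W B a l = 1 := by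
  have hc : a.count l = 0 := by
    rw [List.count_eq_zero]
    intro hl
    exact lt_irrefl l (h l hl)
  have hp : (a.countP fun p => l < p) = 0 := by
    rw [List.countP_eq_zero]
    intro p hpa
    simpa using not_lt_of_gt (h p hpa)
  simp [rupTerm, hc, hp]

lemma rup_le_foldr_max (a : List ℕ) : ∀ p ∈ a, p ≤ a.foldr max 0 := by
  induction a with
  | nil => simp
  | cons x t ih =>
    intro p hp
    rcases List.mem_cons.1 hp with h | h
    · simp [h, le_max_left]
    · exact le_trans (ih p h) (by simp [le_max_right])

lemma rup_support_subset (s : ℝ) (W B : ℕ → ℝ) (a : List ℕ) (N : ℕ)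
    (hN : ∀ p ∈ a, p < N) :
    Function.mulSupport (rupTerm s W B a) ⊆ ↑(range N) := by
  intro l hl
  simp only [coe_range, Set.mem_Iio]
  by_contra hcon
  push_neg at hcon
  exact hl (rupTerm_eq_one s W B a l (fun p hp => lt_of_lt_of_le (hN p hp) hcon))

lemma rup_corr_prod (W B : ℕ → ℝ) (r N : ℕ) (hrN : r < N) :
    ∏ l ∈ range N,
      (if l = r then B r / (W r + B r) else if l < r then W l / (W l + B l) else 1) =
      blockProb W B r := by
  rw [← Finset.prod_subset (Finset.range_subset_range.2 hrN)
    (f := fun l => if l = r then B r / (W r + B r) else if l < r then W l / (W l + B l) else 1)]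
  · rw [Finset.prod_range_succ]
    simp only [if_true]
    rw [blockProb, mul_comm]
    congr 1
    refine Finset.prod_congr rfl (fun l hl => ?_)
    have : l < r := Finset.mem_range.1 hl
    simp [ne_of_lt this, this]
  · intro x _ hx
    have h1 : ¬ x < r + 1 := by simpa using hx
    have h2 : r < x := by omega
    simp [(ne_of_lt h2).symm, not_lt_of_gt h2]

lemma rup_joint_eq (s : ℝ) (a : List ℕ) : ∀ W B : ℕ → ℝ,
    jointXi s W B a = ∏ᶠ l, rupTerm s W B a l := by
  induction a with
  | nil =>
    intro W B
    rw [jointXi]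
    rw [finprod_eq_one_of_forall_eq_one (fun l => rupTerm_eq_one s W B [] l (by simp))]
  | cons r a ih =>
    intro W B
    set N := (r :: a).foldr max 0 + 1 with hNdef
    have hN : ∀ p ∈ r :: a, p < N := fun p hp =>
      Nat.lt_succ_of_le (rup_le_foldr_max _ p hp)
    have hNa : ∀ p ∈ a, p < N := fun p hp => hN p (List.mem_cons_of_mem _ hp)
    have hrN : r < N := hN r (List.mem_cons_self)
    rw [jointXi, ih]
    rw [finprod_eq_prod_of_mulSupport_subset _ (rup_support_subset s W B (r :: a) N hN),
        finprod_eq_prod_of_mulSupport_subset _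
          (rup_support_subset s (updW s W r) (updB s B r) a N hNa)]
    calc blockProb W B r * ∏ l ∈ range N, rupTerm s (updW s W r) (updB s B r) a l
        = (∏ l ∈ range N,
            (if l = r then B r / (W r + B r) else if l < r then W l / (W l + B l) else 1)) *
          ∏ l ∈ range N, rupTerm s (updW s W r) (updB s B r) a l := by
          rw [rup_corr_prod W B r N hrN]
      _ = ∏ l ∈ range N, rupTerm s W B (r :: a) l := by
          rw [← Finset.prod_mul_distrib]
          exact Finset.prod_congr rfl (fun l _ => (rupTerm_cons s W B r a l).symm)

/-- The joint law of the first `m` failure states of the reinforced urn process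
has the explicit product form
`P(ξ₁ = a₁,…,ξ_m = a_m) = ∏_{l≥0} [∏_{i<d_l}(b_l+si) ∏_{i<f_l}(w_l+si)] /
∏_{i<d_l+f_l}(w_l+b_l+si)` (a finitary product: all but finitely many factors
equal 1), where `d_l = #{p : a_p = l}` and `f_l = #{p : a_p > l}`. In
particular it depends on `(a₁,…,a_m)` only through the counts `(d_l, f_l)`, so
the sequence `(ξ_i)` is exchangeable. -/
theorem rup_joint_law_product_form (w b : ℕ → ℝ) (s : ℝ)
    (hw : ∀ j, 0 < w j) (hb : ∀ j, 0 < b j) (hs : 0 < s)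
    (hrec : Filter.Tendsto (fun n => ∏ j ∈ range (n + 1), w j / (w j + b j))
      Filter.atTop (nhds 0)) :
    (∀ a : List ℕ,
      jointXi s w b a =
        ∏ᶠ l : ℕ,
          ((∏ i ∈ range (a.count l), (b l + s * i)) *
              ∏ i ∈ range (a.countP fun p => l < p), (w l + s * i)) /
            ∏ i ∈ range (a.count l + a.countP fun p => l < p),
              (w l + b l + s * i)) ∧
    (∀ a₁ a₂ : List ℕ, a₁.Perm a₂ → jointXi s w b a₁ = jointXi s w b a₂) := by
  constructor
  · exact fun a => rup_joint_eq s a w b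
  · intro a₁ a₂ h
    rw [rup_joint_eq s a₁ w b, rup_joint_eq s a₂ w b]
    refine finprod_congr (fun l => ?_)
    rw [rupTerm, rupTerm, h.count_eq, h.countP_eq]
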